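/- Correctness of the Hopcroft–Karp-style equivalence test for deterministic forest automata: Let M₁, M₂ be deterministic forest automata and suppose a partition (Union-Find structure) on Q₁ ⊎ Q₂ is constructed such that (a) Find(0₁) = Find(0₂); (b) if Find(p₁) = Find(p₂) and Find(q₁) = Find(q₂) with pᵢ, qᵢ ∈ Qᵢ, then Find(δ₁(p₁,a)) = Find(δ₂(p₂,a)) for all a ∈ A and Find(p₁+q₁) = Find(p₂+q₂); (c) no block contains both an accepting state of one automaton and a non-accepting state of the other. Then L(M₁) = L(M₂). More precisely, Find(p₁) = Find(p₂) implies L(p₁) = L(p₂), where L(p) = { c ∈ C(A) | δ̂(p,c) ∈ E } is the set of contexts sending p into an accepting state. -/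
import Mathlib


/-- Forests over an alphabet `A`. -/
inductive Forest (A : Type) : Type
  | nil : Forest A
  | cons : A → Forest A → Forest A → Forest A

namespace Forest

def append {A : Type} : Forest A → Forest A → Forest A
  | nil, g => g
  | cons a c f, g => cons a c (append f g)

end Forest

/-- Contexts over `A`: forests with exactly one hole at a leaf. -/
inductive Context (A : Type) : Type
  | hole : Forest A → Context A
  | cons : A → Forest A → Context A → Context A
  | down : A → Context A → Forest A → Context A

/-- A deterministic forest automaton. -/
structure FDFA (A Q : Type) where
  zero : Q
  add : Q → Q → Q
  add_assoc : ∀ p q r, add (add p q) r = add p (add q r)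
  zero_add : ∀ q, add zero q = q
  add_zero : ∀ q, add q zero = q
  δ : Q → A → Q
  E : Set Q

def FDFA.eval {A Q : Type} (M : FDFA A Q) : Forest A → Q
  | .nil => M.zero
  | .cons a c f => M.add (M.δ (M.eval c) a) (M.eval f)

def FDFA.Lang {A Q : Type} (M : FDFA A Q) : Set (Forest A) := {f | M.eval f ∈ M.E}

/-- `δ̂(c, p)`: the state reached by evaluating the context `c` with the value of
the hole set to `p`. -/
def FDFA.ceval {A Q : Type} (M : FDFA A Q) : Context A → Q → Q
  | .hole g, p => M.add p (M.eval g)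
  | .cons a t c, p => M.add (M.δ (M.eval t) a) (M.ceval c p)
  | .down a c g, p => M.add (M.δ (M.ceval c p) a) (M.eval g)

/-- correctness of the Hopcroft–Karp-style equivalence test:
suppose a partition (given by `Find : Q₁ ⊎ Q₂ → β`) satisfies
(a) `Find(0₁) = Find(0₂)`;
(b) it is a congruence for the alphabet transitions and the horizontal addition
across the two automata;
(c) no block contains an accepting state of one automaton together with a
non-accepting state of the other.
Then `L(M₁) = L(M₂)`; more precisely, `Find(p₁) = Find(p₂)` implies
`L(p₁) = L(p₂)`, where `L(p) = {c ∈ C(A) | δ̂(p,c) ∈ E}`. -/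
theorem equivalence_test_correct {A Q₁ Q₂ β : Type}
    (M₁ : FDFA A Q₁) (M₂ : FDFA A Q₂) (Find : Sum Q₁ Q₂ → β)
    (h0 : Find (Sum.inl M₁.zero) = Find (Sum.inr M₂.zero))
    (hδ : ∀ p₁ p₂ a, Find (Sum.inl p₁) = Find (Sum.inr p₂) →
      Find (Sum.inl (M₁.δ p₁ a)) = Find (Sum.inr (M₂.δ p₂ a)))
    (hadd : ∀ p₁ p₂ q₁ q₂, Find (Sum.inl p₁) = Find (Sum.inr p₂) →
      Find (Sum.inl q₁) = Find (Sum.inr q₂) →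
      Find (Sum.inl (M₁.add p₁ q₁)) = Find (Sum.inr (M₂.add p₂ q₂)))
    (hE : ∀ p₁ p₂, Find (Sum.inl p₁) = Find (Sum.inr p₂) →
      (p₁ ∈ M₁.E ↔ p₂ ∈ M₂.E)) :
    M₁.Lang = M₂.Lang ∧
    ∀ p₁ p₂, Find (Sum.inl p₁) = Find (Sum.inr p₂) →
      {c : Context A | M₁.ceval c p₁ ∈ M₁.E} = {c : Context A | M₂.ceval c p₂ ∈ M₂.E} := by
  have hev : ∀ f : Forest A, Find (Sum.inl (M₁.eval f)) = Find (Sum.inr (M₂.eval f)) := by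
    intro f
    induction f with
    | nil => exact h0
    | cons a c g ihc ihg => exact hadd _ _ _ _ (hδ _ _ a ihc) ihg
  have hcev : ∀ (c : Context A) p₁ p₂, Find (Sum.inl p₁) = Find (Sum.inr p₂) →
      Find (Sum.inl (M₁.ceval c p₁)) = Find (Sum.inr (M₂.ceval c p₂)) := by
    intro c
    induction c with
    | hole g => intro p₁ p₂ h; exact hadd _ _ _ _ h (hev g)
    | cons a t c ih => intro p₁ p₂ h; exact hadd _ _ _ _ (hδ _ _ a (hev t)) (ih _ _ h)
    | down a c g ih => intro p₁ p₂ h; exact hadd _ _ _ _ (hδ _ _ a (ih _ _ h)) (hev g)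
  constructor
  · ext f
    exact hE _ _ (hev f)
  · intro p₁ p₂ h
    ext c
    exact hE _ _ (hcev c p₁ p₂ h)
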